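/- Let M be a set, φ : M → ℝ → M a map, and f : M → ℝ → ℝ a function such that: (i) f(x,0) = 0 for all x; (ii) f(φ(x,t), t′) − f(x, t+t′) + f(x,t) = 0 for all x, t, t′; and (iii) for each x the function t ↦ f(x,t) is continuously differentiable. Define h(x) to be the derivative of t ↦ f(x,t) at t = 0. Then f(x,t) = ∫₀ᵗ h(φ(x,s)) ds for all x ∈ M and t ∈ ℝ. In particular, f is uniquely determined by h. -/

import Mathlib

/-- A 1-parameter cocycle over a flow is recovered from its derivative at time `0` by
integration along the flow: if `f(x,0) = 0`, `f(φ(x,t),t') − f(x,t+t') + f(x,t) = 0`, and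
`t ↦ f(x,t)` is continuously differentiable, then with `h(x) = (d/dt)|₀ f(x,t)` one has
`f(x,t) = ∫₀ᵗ h(φ(x,s)) ds`; in particular `f` is uniquely determined by `h`. -/
theorem flow_one_cocycle_determined_by_derivative
    {M : Type*} (φ : M → ℝ → M) (f : M → ℝ → ℝ)
    (hzero : ∀ x : M, f x 0 = 0)
    (hcocycle : ∀ (x : M) (t t' : ℝ), f (φ x t) t' - f x (t + t') + f x t = 0)
    (hC1 : ∀ x : M, ContDiff ℝ 1 (f x))
    (h : M → ℝ) (hh : ∀ x : M, h x = deriv (f x) 0) :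
    ∀ (x : M) (t : ℝ), f x t = ∫ s in (0 : ℝ)..t, h (φ x s) := by
  have key : ∀ (x : M) (s : ℝ), h (φ x s) = deriv (f x) s := by
    intro x s
    have hfe : f (φ x s) = fun t' => f x (s + t') - f x s := by
      funext t'; have := hcocycle x s t'; linarith
    rw [hh, hfe]
    have : deriv (fun t' => f x (s + t') - f x s) 0
        = deriv (fun t' => f x (s + t')) 0 := by
      simp [deriv_sub_const]
    rw [this]
    have := deriv_comp_const_add (f x) s 0
    simpa using this
  intro x t
  have hdiff : ∀ s ∈ Set.uIcc (0:ℝ) t, HasDerivAt (f x) (h (φ x s)) s := by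
    intro s _
    have := ((hC1 x).differentiable one_ne_zero s).hasDerivAt
    rw [key x s]; exact this
  have hcont : ContinuousOn (fun s => h (φ x s)) (Set.uIcc (0:ℝ) t) := by
    have : (fun s => h (φ x s)) = deriv (f x) := by funext s; exact key x s
    rw [this]
    exact ((hC1 x).continuous_deriv le_rfl).continuousOn
  have := intervalIntegral.integral_eq_sub_of_hasDerivAt hdiff
    (hcont.intervalIntegrable)
  rw [this, hzero x, sub_zero]
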